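/- The number of (s,s+1)-core partitions with distinct parts equals the Fibonacci number F_{s+1}. -/

import Mathlib

open Finset

/-- `lam` gives the parts of a partition with `l` parts, 1-indexed:
positive parts which are nonincreasing. -/
def IsPartition (lam : ℕ → ℕ) (l : ℕ) : Prop :=
  (∀ i, 1 ≤ i → i ≤ l → 0 < lam i) ∧ ∀ i, 1 ≤ i → i < l → lam (i + 1) ≤ lam i

/-- Hook length of the box `(i,j)` of the Young diagram:
arm (boxes to the right) + leg (boxes below) + 1. -/
def hookLen (lam : ℕ → ℕ) (l i j : ℕ) : ℕ :=
  (lam i - j) + ((Finset.Ioc i l).filter fun r => j ≤ lam r).card + 1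

/-- The β-set: the set of first-column hook lengths `λ_i + l - i`. -/
def betaSet (lam : ℕ → ℕ) (l : ℕ) : Finset ℕ :=
  (Finset.Icc 1 l).image fun i => lam i + l - i

/-- `λ` is an `s`-core: no box of the Young diagram has hook length `s`. -/
def IsCore (lam : ℕ → ℕ) (l s : ℕ) : Prop :=
  ∀ i ∈ Finset.Icc 1 l, ∀ j ∈ Finset.Icc 1 (lam i), hookLen lam l i j ≠ s

/-- `λ` has `d`-distinct parts: consecutive parts differ by at least `d`. -/
def DDistinct (lam : ℕ → ℕ) (l d : ℕ) : Prop :=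
  ∀ i, 1 ≤ i → i < l → lam (i + 1) + d ≤ lam i

/-- `X` is a `d`-th order twin-free set. -/
def TwinFree (d : ℕ) (X : Finset ℕ) : Prop :=
  ∀ x ∈ X, ∀ k, 1 ≤ k → k ≤ d → x + k ∉ X

open Classical in
/-- Number of `d`-th order twin-free subsets of `{1, 2, ..., s-1}`. -/
noncomputable def numTwinFree (d s : ℕ) : ℕ :=
  ((Finset.Icc 1 (s - 1)).powerset.filter fun X => TwinFree d X).card


/-- The parts function (1-indexed) of a partition given as a list of parts. -/
def partOf (L : List ℕ) : ℕ → ℕ := fun i => L.getD (i - 1) 0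

def goodSet (s : ℕ) : Set (List ℕ) :=
  {L | L.Pairwise (· > ·) ∧ (∀ x ∈ L, 0 < x) ∧ L.headD 0 + L.length ≤ s}

lemma le_headD_of_mem {x : ℕ} {L : List ℕ} (hL : L.Pairwise (· > ·)) (hx : x ∈ L) :
    x ≤ L.headD 0 := by
  cases L with
  | nil => simp at hx
  | cons a t =>
    simp only [List.headD_cons]
    rcases List.mem_cons.mp hx with h | h
    · omega
    · exact le_of_lt (List.rel_of_pairwise_cons hL h)

lemma headD_eq_getD (L : List ℕ) : L.headD 0 = L.getD 0 0 := by cases L <;> simp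

lemma sorted_getD {L : List ℕ} (h : L.Pairwise (· > ·)) {a b : ℕ} (hab : a < b)
    (hb : b < L.length) : L.getD b 0 < L.getD a 0 := by
  rw [List.getD_eq_getElem _ _ hb, List.getD_eq_getElem _ _ (hab.trans hb)]
  exact List.pairwise_iff_get.mp h ⟨a, hab.trans hb⟩ ⟨b, hb⟩ hab

lemma pos_getD {L : List ℕ} (h : ∀ x ∈ L, 0 < x) {a : ℕ} (ha : a < L.length) :
    0 < L.getD a 0 := by
  rw [List.getD_eq_getElem _ _ ha]; exact h _ (List.getElem_mem _)

lemma getD_mem {L : List ℕ} {a : ℕ} (ha : a < L.length) : L.getD a 0 ∈ L := by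
  rw [List.getD_eq_getElem _ _ ha]; exact List.getElem_mem _

lemma mem_goodSet_iff (s : ℕ) (hs : 0 < s) (L : List ℕ) :
    (IsPartition (partOf L) L.length ∧ IsCore (partOf L) L.length s ∧
      IsCore (partOf L) L.length (s + 1) ∧ DDistinct (partOf L) L.length 1) ↔
    L ∈ goodSet s := by
  constructor
  · rintro ⟨hpart, hcs, hcs1, hdd⟩
    -- sorted
    have hsort : L.Pairwise (· > ·) := by
      rw [← List.isChain_iff_pairwise, List.isChain_iff_getElem]
      intro i hi
      have hi1 : i + 1 < L.length := by omega
      have := hdd (i + 1) (by omega) (by omega)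
      simp only [partOf, Nat.add_sub_cancel] at this
      rw [← List.getD_eq_getElem L 0 hi1, ← List.getD_eq_getElem L 0 (by omega : i < L.length)]
      omega
    have hpos : ∀ x ∈ L, 0 < x := by
      intro x hx
      obtain ⟨⟨k, hk⟩, rfl⟩ := List.mem_iff_get.mp hx
      have := hpart.1 (k + 1) (by omega) (by omega)
      simp only [partOf, Nat.add_sub_cancel] at this
      simp only [List.get_eq_getElem]
      rw [← List.getD_eq_getElem L 0 hk]
      exact this
    refine ⟨hsort, hpos, ?_⟩
    by_contra hbig
    -- L nonempty
    have hl : 1 ≤ L.length := by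
      rcases Nat.eq_zero_or_pos L.length with h0 | h1
      · rw [List.length_eq_zero_iff.mp h0] at hbig; simp at hbig
      · exact h1
    set lam := partOf L with hlam
    set l := L.length with hldef
    set lam1 := lam 1 with hlam1
    have hhead : L.headD 0 = lam1 := by
      rw [headD_eq_getD]; rfl
    have hlam1pos : 0 < lam1 := hpart.1 1 le_rfl hl
    have hbig' : s + 1 ≤ lam1 + l := by rw [hhead] at hbig; omega
    set c : ℕ → ℕ := fun j => ((Finset.Ioc 1 l).filter fun r => j ≤ lam r).card with hc
    have hhook : ∀ j, hookLen lam l 1 j = (lam1 - j) + c j + 1 := fun j => rfl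
    -- c 1 = l - 1
    have hc1 : c 1 = l - 1 := by
      simp only [hc]
      rw [Finset.filter_true_of_mem, Nat.card_Ioc]
      intro r hr
      rw [Finset.mem_Ioc] at hr
      exact hpart.1 r (by omega) hr.2
    -- c lam1 = 0
    have hctop : c lam1 = 0 := by
      simp only [hc]
      rw [Finset.filter_false_of_mem, Finset.card_empty]
      intro r hr
      rw [Finset.mem_Ioc] at hr
      have h2 : L.getD (r - 1) 0 < L.getD 0 0 := sorted_getD hsort (by omega) (by omega)
      have e : lam r = L.getD (r - 1) 0 := rfl
      have e1 : lam 1 = L.getD 0 0 := rfl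
      omega
    -- step: c j ≤ c (j+1) + 1
    have hstep : ∀ j, c j ≤ c (j + 1) + 1 := by
      intro j
      have hsub : (Finset.Ioc 1 l).filter (fun r => j ≤ lam r) ⊆
          ((Finset.Ioc 1 l).filter fun r => j + 1 ≤ lam r) ∪
          ((Finset.Ioc 1 l).filter fun r => lam r = j) := by
        intro r hr
        rw [Finset.mem_filter] at hr
        rw [Finset.mem_union, Finset.mem_filter, Finset.mem_filter]
        rcases Nat.lt_or_ge (lam r) (j + 1) with h | h
        · exact Or.inr ⟨hr.1, by omega⟩
        · exact Or.inl ⟨hr.1, h⟩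
      have hone : ((Finset.Ioc 1 l).filter fun r => lam r = j).card ≤ 1 := by
        rw [Finset.card_le_one]
        intro r hr r' hr'
        rw [Finset.mem_filter, Finset.mem_Ioc] at hr hr'
        rcases lt_trichotomy r r' with hlt | heq | hgt
        · have : L.getD (r' - 1) 0 < L.getD (r - 1) 0 :=
            sorted_getD hsort (by omega) (by omega)
          have e : lam r = L.getD (r - 1) 0 := rfl
          have e' : lam r' = L.getD (r' - 1) 0 := rfl
          omega
        · exact heq
        · have : L.getD (r - 1) 0 < L.getD (r' - 1) 0 :=
            sorted_getD hsort (by omega) (by omega)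
          have e : lam r = L.getD (r - 1) 0 := rfl
          have e' : lam r' = L.getD (r' - 1) 0 := rfl
          omega
      calc c j ≤ (((Finset.Ioc 1 l).filter fun r => j + 1 ≤ lam r) ∪
          ((Finset.Ioc 1 l).filter fun r => lam r = j)).card :=
            Finset.card_le_card hsub
        _ ≤ c (j + 1) + ((Finset.Ioc 1 l).filter fun r => lam r = j).card :=
            Finset.card_union_le _ _
        _ ≤ c (j + 1) + 1 := by omega
    have hmem1 : (1 : ℕ) ∈ Finset.Icc 1 l := Finset.mem_Icc.mpr ⟨le_rfl, hl⟩
    have claim : ∀ j, 1 ≤ j → j ≤ lam1 → s + 2 ≤ hookLen lam l 1 j := by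
      intro j hj
      induction j, hj using Nat.le_induction with
      | base =>
        intro _
        have hne1 := hcs 1 hmem1 1 (Finset.mem_Icc.mpr ⟨le_rfl, hlam1pos⟩)
        have hne2 := hcs1 1 hmem1 1 (Finset.mem_Icc.mpr ⟨le_rfl, hlam1pos⟩)
        rw [hhook] at *
        omega
      | succ j hj ih =>
        intro hle
        have h1 := ih (by omega)
        have hne1 := hcs 1 hmem1 (j + 1) (Finset.mem_Icc.mpr ⟨by omega, hle⟩)
        have hne2 := hcs1 1 hmem1 (j + 1) (Finset.mem_Icc.mpr ⟨by omega, hle⟩)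
        have hst := hstep j
        rw [hhook] at *
        omega
    have := claim lam1 hlam1pos le_rfl
    rw [hhook] at this
    omega
  · rintro ⟨hsort, hpos, hbound⟩
    have hpart : IsPartition (partOf L) L.length := by
      constructor
      · intro i h1 h2
        exact pos_getD hpos (by omega)
      · intro i h1 h2
        have : L.getD i 0 < L.getD (i - 1) 0 := sorted_getD hsort (by omega) (by omega)
        have e : i + 1 - 1 = i := by omega
        simp only [partOf, e]
        omega
    have hcore : ∀ t, s ≤ t → IsCore (partOf L) L.length t := by
      intro t ht i hi j hj
      rw [Finset.mem_Icc] at hi hj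
      have hlami : partOf L i ≤ L.headD 0 :=
        le_headD_of_mem hsort (getD_mem (by omega : i - 1 < L.length))
      have hcard : ((Finset.Ioc i L.length).filter fun r => j ≤ partOf L r).card ≤
          L.length - i := by
        calc _ ≤ (Finset.Ioc i L.length).card := Finset.card_filter_le _ _
          _ = L.length - i := Nat.card_Ioc _ _
      rw [hookLen]
      omega
    exact ⟨hpart, hcore s le_rfl, hcore (s + 1) (by omega), by
      intro i h1 h2
      have : L.getD i 0 < L.getD (i - 1) 0 := sorted_getD hsort (by omega) (by omega)
      have e : i + 1 - 1 = i := by omega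
      simp only [partOf, e]
      omega⟩

lemma goodSet_zero : goodSet 0 = {[]} := by
  ext L
  simp only [goodSet, Set.mem_setOf_eq, Set.mem_singleton_iff]
  constructor
  · rintro ⟨-, -, h⟩
    exact List.length_eq_zero_iff.mp (by omega)
  · rintro rfl; simp

lemma goodSet_one : goodSet 1 = {[]} := by
  ext L
  simp only [goodSet, Set.mem_setOf_eq, Set.mem_singleton_iff]
  constructor
  · rintro ⟨hs, hp, h⟩
    cases L with
    | nil => rfl
    | cons a t =>
      have : 0 < a := hp a (by simp)
      simp only [List.headD_cons, List.length_cons] at h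
      omega
  · rintro rfl; simp

lemma goodSet_succ_succ (s : ℕ) :
    goodSet (s+2) = goodSet (s+1) ∪ (fun L => (s+1-L.length) :: L) '' goodSet s := by
  ext M
  simp only [Set.mem_union, Set.mem_image, goodSet, Set.mem_setOf_eq]
  constructor
  · rintro ⟨hs, hp, hlen⟩
    by_cases hM : M.headD 0 + M.length ≤ s + 1
    · exact Or.inl ⟨hs, hp, hM⟩
    · right
      cases M with
      | nil => simp at hM
      | cons a t =>
        simp only [List.headD_cons, List.length_cons] at hlen hM
        have ha : a = s + 1 - t.length := by omega
        refine ⟨t, ⟨hs.of_cons, fun x hx => hp x (List.mem_cons_of_mem _ hx), ?_⟩, ?_⟩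
        · cases t with
          | nil => simp
          | cons b u =>
            have hb : b < a := List.rel_of_pairwise_cons hs (by simp)
            simp only [List.headD_cons, List.length_cons] at *
            omega
        · simp [← ha]
  · rintro (⟨hs, hp, hlen⟩ | ⟨L, ⟨hsL, hpL, hlenL⟩, rfl⟩)
    · exact ⟨hs, hp, by omega⟩
    · have hlenle : L.length ≤ s := by
        have := hlenL; omega
      refine ⟨?_, ?_, ?_⟩
      · refine List.pairwise_cons.mpr ⟨fun b hb => ?_, hsL⟩
        have := le_headD_of_mem hsL hb
        omega
      · intro x hx
        rcases List.mem_cons.mp hx with rfl | h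
        · omega
        · exact hpL x h
      · simp only [List.headD_cons, List.length_cons]
        omega

lemma goodSet_ncard : ∀ s : ℕ, (goodSet s).Finite ∧ (goodSet s).ncard = Nat.fib (s+1) := by
  intro s
  induction s using Nat.strong_induction_on with
  | _ s ih =>
    match s with
    | 0 => rw [goodSet_zero]; exact ⟨Set.finite_singleton _, by simp⟩
    | 1 => rw [goodSet_one]; exact ⟨Set.finite_singleton _, by simp⟩
    | (n+2) =>
      obtain ⟨hf1, hc1⟩ := ih (n+1) (by omega)
      obtain ⟨hf0, hc0⟩ := ih n (by omega)
      have hinj : Function.Injective (fun L : List ℕ => (n+1-L.length) :: L) := by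
        intro a b h
        simpa using congrArg List.tail h
      have hfim : ((fun L => (n+1-L.length) :: L) '' goodSet n).Finite := hf0.image _
      have hdisj : Disjoint (goodSet (n+1)) ((fun L => (n+1-L.length) :: L) '' goodSet n) := by
        rw [Set.disjoint_left]
        rintro M ⟨hs, hp, hlen⟩ ⟨L, ⟨hsL, hpL, hlenL⟩, rfl⟩
        simp only [List.headD_cons, List.length_cons] at hlen
        omega
      constructor
      · rw [goodSet_succ_succ]; exact hf1.union hfim
      · rw [goodSet_succ_succ, Set.ncard_union_eq hdisj hf1 hfim,
          Set.ncard_image_of_injective _ hinj, hc1, hc0]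
        have e1 : Nat.fib (n+1+1) = Nat.fib n + Nat.fib (n+1) := Nat.fib_add_two
        have e2 : Nat.fib (n+2+1) = Nat.fib (n+1) + Nat.fib (n+1+1) := Nat.fib_add_two
        omega

/-- The number of `(s,s+1)`-core partitions with distinct parts is the
Fibonacci number `F_{s+1}`. -/
theorem stmt16 (s : ℕ) (hs : 0 < s) :
    {L : List ℕ | IsPartition (partOf L) L.length ∧ IsCore (partOf L) L.length s ∧
      IsCore (partOf L) L.length (s + 1) ∧ DDistinct (partOf L) L.length 1}.ncard =
      Nat.fib (s + 1) := by
  have hset : {L : List ℕ | IsPartition (partOf L) L.length ∧ IsCore (partOf L) L.length s ∧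
      IsCore (partOf L) L.length (s + 1) ∧ DDistinct (partOf L) L.length 1} = goodSet s := by
    ext L
    exact mem_goodSet_iff s hs L
  rw [hset, (goodSet_ncard s).2]
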